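/- For every integer M ≥ 1, the coefficients λ_{2p-1}^{2M} satisfy ∑_{p=1}^{M} λ_{2p-1}^{2M} (2p-1)^{2M} = (-1)^{M+1} [(2M-1)!!]^2. -/

import Mathlib

open Nat Finset
open fwdDiff


lemma fwdDiff_pow_expand (h : ℝ) (m : ℕ) :
    Δ_[h] (fun x : ℝ => x ^ m) =
      ∑ j ∈ Finset.range m, ((m.choose j : ℝ) * h ^ (m - j)) • (fun x : ℝ => x ^ j) := by
  ext x
  simp only [fwdDiff, Finset.sum_apply, Pi.smul_apply, smul_eq_mul]
  rw [add_pow, Finset.sum_range_succ]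
  simp only [Nat.choose_self, Nat.sub_self, pow_zero, Nat.cast_one, mul_one]
  rw [add_sub_cancel_right]
  exact Finset.sum_congr rfl fun j hj => by ring

lemma fwdDiff_iter_pow_of_lt (h : ℝ) : ∀ n m : ℕ, m < n →
    (Δ_[h])^[n] (fun x : ℝ => x ^ m) = 0 := by
  intro n
  induction n with
  | zero => exact fun m hm => absurd hm (Nat.not_lt_zero m)
  | succ n IH =>
    intro m hm
    rw [Function.iterate_succ_apply, fwdDiff_pow_expand, fwdDiff_iter_finset_sum]
    refine Finset.sum_eq_zero fun j hj => ?_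
    rw [fwdDiff_iter_const_smul, IH j (by have := Finset.mem_range.mp hj; omega), smul_zero]

lemma fwdDiff_iter_pow_self (h : ℝ) (n : ℕ) :
    (Δ_[h])^[n] (fun x : ℝ => x ^ n) = fun _ => (n ! : ℝ) * h ^ n := by
  induction n with
  | zero => ext x; simp
  | succ n IH =>
    rw [Function.iterate_succ_apply, fwdDiff_pow_expand, fwdDiff_iter_finset_sum,
      Finset.sum_range_succ]
    rw [Finset.sum_eq_zero fun j hj => by
      rw [fwdDiff_iter_const_smul, fwdDiff_iter_pow_of_lt h n j (Finset.mem_range.mp hj),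
        smul_zero]]
    rw [fwdDiff_iter_const_smul, IH]
    ext x
    simp only [zero_add, Pi.smul_apply, smul_eq_mul, Nat.choose_succ_self_right,
      Nat.factorial_succ]
    push_cast
    rw [Nat.add_sub_cancel_left]  -- maybe wrong
    ring

lemma full_sum (n : ℕ) :
    ∑ k ∈ Finset.range (n + 1),
      ((-1 : ℝ) ^ (n - k) * (n.choose k : ℝ) * (2 * (k : ℝ) - n) ^ n) = (n ! : ℝ) * 2 ^ n := by
  have key := fwdDiff_iter_eq_sum_shift (2 : ℝ) (fun x : ℝ => x ^ n) n (-(n : ℝ))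
  rw [fwdDiff_iter_pow_self] at key
  simp only at key
  rw [key]
  refine (Finset.sum_congr rfl fun k hk => ?_).symm
  simp only [zsmul_eq_mul, nsmul_eq_mul]
  push_cast
  ring

lemma half_sum (M : ℕ) (hM : 1 ≤ M) :
    ∑ q ∈ Finset.range M, ((-1 : ℝ) ^ (M - 1 - q) * (((2 * M - 1).choose (M + q)) : ℝ) *
        (2 * (q : ℝ) + 1) ^ (2 * M - 1)) = 2 ^ (2 * M - 2) * (((2 * M - 1)! : ℝ)) := by
  have hodd : Odd (2 * M - 1) := ⟨M - 1, by omega⟩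
  set f : ℕ → ℝ := fun k => (-1 : ℝ) ^ (2 * M - 1 - k) * (((2 * M - 1).choose k) : ℝ) *
      (2 * (k : ℝ) - ((2 * M - 1 : ℕ) : ℝ)) ^ (2 * M - 1) with hf
  set g : ℕ → ℝ := fun q => (-1 : ℝ) ^ (M - 1 - q) * (((2 * M - 1).choose (M + q)) : ℝ) *
      (2 * (q : ℝ) + 1) ^ (2 * M - 1) with hg
  have key : ∑ k ∈ Finset.range (2 * M), f k = (((2 * M - 1)! : ℝ)) * 2 ^ (2 * M - 1) := by
    have := full_sum (2 * M - 1)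
    rw [show 2 * M - 1 + 1 = 2 * M from by omega] at this
    exact this
  have e4 : ((2 * M - 1 : ℕ) : ℝ) = 2 * (M : ℝ) - 1 := by
    rw [Nat.cast_sub (by omega)]; push_cast; ring
  -- split the full sum
  have hsplit : ∑ k ∈ Finset.range (2 * M), f k
      = ∑ q ∈ Finset.range M, f q + ∑ q ∈ Finset.range M, f (M + q) := by
    rw [Finset.range_eq_Ico, ← Finset.sum_Ico_consecutive f (Nat.zero_le M) (by omega : M ≤ 2 * M),
      ← Finset.range_eq_Ico, Finset.sum_Ico_eq_sum_range, show 2 * M - M = M from by omega]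
  -- second half equals the g-sum
  have hsecond : ∀ q, f (M + q) = g q := by
    intro q
    simp only [hf, hg]
    rw [show 2 * M - 1 - (M + q) = M - 1 - q from by omega, e4]
    push_cast
    ring_nf
  -- first half equals the g-sum via reflection
  have hfirst : ∑ q ∈ Finset.range M, f q = ∑ q ∈ Finset.range M, g q := by
    rw [← Finset.sum_range_reflect g M]
    refine Finset.sum_congr rfl fun q hq => ?_
    have hq' : q < M := Finset.mem_range.mp hq
    simp only [hf, hg]
    rw [show M - 1 - (M - 1 - q) = q from by omega,
      show M + (M - 1 - q) = 2 * M - 1 - q from by omega,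
      Nat.choose_symm (show q ≤ 2 * M - 1 from by omega),
      Nat.cast_sub (show q ≤ M - 1 from by omega), Nat.cast_sub (show 1 ≤ M from hM),
      Nat.cast_one, e4]
    have hneg : (2 * (q : ℝ) - (2 * (M : ℝ) - 1)) = -(2 * ((M : ℝ) - 1 - q) + 1) := by ring
    rw [hneg, Odd.neg_pow hodd]
    have hs : (-1 : ℝ) ^ (2 * M - 1 - q) * (-1 : ℝ) ^ q = -1 := by
      rw [← pow_add, show 2 * M - 1 - q + q = 2 * M - 1 from by omega, hodd.neg_one_pow]
    have hs2 : (-1 : ℝ) ^ q * (-1 : ℝ) ^ q = 1 := by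
      rw [← pow_add, ← two_mul, pow_mul, neg_one_sq, one_pow]
    have hs3 : (-1 : ℝ) ^ (2 * M - 1 - q) = -(-1 : ℝ) ^ q := by
      linear_combination ((-1 : ℝ) ^ q) * hs - ((-1 : ℝ) ^ (2 * M - 1 - q)) * hs2
    rw [hs3]; ring
  have hsum2 : Finset.sum (Finset.range M) g + Finset.sum (Finset.range M) g
      = (((2 * M - 1)! : ℝ)) * 2 ^ (2 * M - 1) := by
    rw [← key, hsplit, hfirst]
    congr 1
    exact Finset.sum_congr rfl fun q _ => (hsecond q).symm
  have hpow : (2 : ℝ) ^ (2 * M - 1) = 2 * 2 ^ (2 * M - 2) := by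
    rw [show 2 * M - 1 = (2 * M - 2) + 1 from by omega, pow_succ]; ring
  rw [hpow] at hsum2
  linarith [hsum2]

/-- The coefficient `λ_{2p-1}^{2M}` of the `2M`-th order staggered finite
difference approximation of the first derivative. -/
noncomputable def lamFD (M p : ℕ) : ℝ :=
  2 * (-1 : ℝ) ^ (p - 1) * ((2 * M - 1)‼ : ℝ) ^ 2 /
    (((2 * M + 2 * p - 2)‼ : ℝ) * ((2 * M - 2 * p)‼ : ℝ) * (2 * p - 1 : ℝ))

/-- Top-moment identity:
`∑_{p=1}^{M} λ_{2p-1}^{2M} (2p-1)^{2M} = (-1)^{M+1} [(2M-1)!!]²`. -/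
theorem lamFD_top_moment (M : ℕ) (hM : 1 ≤ M) :
    ∑ p ∈ Finset.Icc 1 M, lamFD M p * ((2 * p - 1 : ℝ)) ^ (2 * M) =
      (-1 : ℝ) ^ (M + 1) * ((2 * M - 1)‼ : ℝ) ^ 2 := by
  have key := half_sum M hM
  set D : ℝ := ((2 * M - 1)‼ : ℝ) with hD
  set c : ℝ := (-1 : ℝ) ^ (M + 1) * D ^ 2 / (2 ^ (2 * M - 2) * (((2 * M - 1)! : ℝ))) with hc
  have hterm : ∀ q, q < M → lamFD M (1 + q) * ((2 * (((1 + q : ℕ)) : ℝ) - 1)) ^ (2 * M)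
      = c * ((-1 : ℝ) ^ (M - 1 - q) * (((2 * M - 1).choose (M + q)) : ℝ) *
          (2 * (q : ℝ) + 1) ^ (2 * M - 1)) := by
    intro q hq
    have hfq1 : ((M + q)! : ℝ) ≠ 0 := by positivity
    have hfq2 : (((M - 1 - q))! : ℝ) ≠ 0 := by positivity
    have hfq3 : (((2 * M - 1))! : ℝ) ≠ 0 := by positivity
    have hC : (((2 * M - 1).choose (M + q)) : ℝ)
        = ((2 * M - 1)! : ℝ) / (((M + q)! : ℝ) * (((M - 1 - q))! : ℝ)) := by
      have h := Nat.choose_mul_factorial_mul_factorial (show M + q ≤ 2 * M - 1 from by omega)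
      rw [show 2 * M - 1 - (M + q) = M - 1 - q from by omega] at h
      have h' : (((2 * M - 1).choose (M + q) * (M + q)! * (M - 1 - q)! : ℕ) : ℝ)
          = ((2 * M - 1)! : ℝ) := by exact_mod_cast congrArg (Nat.cast : ℕ → ℝ) h
      push_cast at h'
      rw [eq_div_iff (by positivity)]
      linear_combination h'
    have h1 : (-1 : ℝ) ^ (M + 1) * ((-1 : ℝ) ^ (M - 1 - q) * (-1 : ℝ) ^ q) = 1 := by
      rw [← pow_add, ← pow_add, show M + 1 + (M - 1 - q + q) = 2 * M from by omega,
        pow_mul, neg_one_sq, one_pow]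
    have h2 : (-1 : ℝ) ^ (M + 1) * (-1 : ℝ) ^ (M + 1) = 1 := by
      rw [← pow_add, ← two_mul, pow_mul, neg_one_sq, one_pow]
    have h3 : (-1 : ℝ) ^ q * (-1 : ℝ) ^ q = 1 := by
      rw [← pow_add, ← two_mul, pow_mul, neg_one_sq, one_pow]
    have hsign' : (-1 : ℝ) ^ (M - 1 - q) = (-1 : ℝ) ^ (M + 1) * (-1 : ℝ) ^ q := by
      linear_combination ((-1 : ℝ) ^ (M + 1) * (-1 : ℝ) ^ q) * h1
        - ((-1 : ℝ) ^ (M - 1 - q) * (-1 : ℝ) ^ q * (-1 : ℝ) ^ q) * h2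
        - ((-1 : ℝ) ^ (M - 1 - q)) * h3
    have hp1 : (2 : ℝ) ^ (M + q) = 2 ^ M * 2 ^ q := pow_add 2 M q
    have hp2 : (2 : ℝ) ^ (M - 1 - q) = 2 ^ M / (2 ^ q * 2) := by
      rw [eq_div_iff (by positivity),
        show (2 : ℝ) ^ q * 2 = 2 ^ (q + 1) from (pow_succ 2 q).symm, ← pow_add]
      congr 1; omega
    have hp3 : (2 : ℝ) ^ (2 * M - 2) = 2 ^ M * 2 ^ M / 4 := by
      rw [eq_div_iff (by norm_num), show (4 : ℝ) = 2 ^ 2 from by norm_num, ← pow_add, ← pow_add]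
      congr 1; omega
    have hp4 : (2 * (q : ℝ) + 1) ^ (2 * M) = (2 * (q : ℝ) + 1) ^ (2 * M - 1) * (2 * (q : ℝ) + 1) := by
      rw [← pow_succ]; congr 1; omega
    simp only [lamFD, hc, hD]
    rw [show 1 + q - 1 = q from by omega,
      show 2 * M + 2 * (1 + q) - 2 = 2 * (M + q) from by omega,
      show 2 * M - 2 * (1 + q) = 2 * (M - 1 - q) from by omega,
      Nat.doubleFactorial_two_mul, Nat.doubleFactorial_two_mul]
    push_cast
    rw [show (2 * ((1 : ℝ) + (q : ℝ)) - 1) = 2 * (q : ℝ) + 1 from by ring]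
    rw [hp1, hp2, hp4, hC, hsign', hp3]
    have h2q : (2 * (q : ℝ) + 1) ≠ 0 := by positivity
    field_simp
    linear_combination (-4 : ℝ) * h2
  rw [← Finset.Ico_add_one_right_eq_Icc, Finset.sum_Ico_eq_sum_range, Nat.add_sub_cancel]
  calc ∑ q ∈ Finset.range M, lamFD M (1 + q) * ((2 * (((1 + q : ℕ)) : ℝ) - 1)) ^ (2 * M)
      = ∑ q ∈ Finset.range M, c * ((-1 : ℝ) ^ (M - 1 - q) * (((2 * M - 1).choose (M + q)) : ℝ) *
          (2 * (q : ℝ) + 1) ^ (2 * M - 1)) :=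
        Finset.sum_congr rfl fun q hq => hterm q (Finset.mem_range.mp hq)
    _ = c * (2 ^ (2 * M - 2) * (((2 * M - 1)! : ℝ))) := by rw [← Finset.mul_sum, key]
    _ = (-1 : ℝ) ^ (M + 1) * D ^ 2 := by
        rw [hc, div_mul_cancel₀]
        positivity
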